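/- With P the lower unitriangular matrix with entries P_{ij} = e_{i-j}(e^{-a_1},…,e^{-a_{i-1}}), the inverse satisfies (P^{-1})_{ij} = (-1)^{i-j} h_{i-j}(e^{-a_1},…,e^{-a_j}), where h_m denotes the complete homogeneous symmetric polynomial of degree m. -/

import Mathlib

open Matrix

/-- The elementary symmetric polynomial `e_k(x_1, …, x_m)`. -/
def esym {R : Type*} [CommRing R] (x : ℕ → R) (k m : ℕ) : R :=
  ∑ J ∈ (Finset.Icc 1 m).powersetCard k, ∏ j ∈ J, x j

/-- The complete homogeneous symmetric polynomial `h_m(x_1, …, x_j)`. -/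
def hsym {R : Type*} [CommRing R] (x : ℕ → R) (m j : ℕ) : R :=
  ∑ t ∈ (Finset.Icc 1 j).sym m, (Multiset.map x t.1).prod

section Aux
variable {R : Type*} [CommRing R] (x : ℕ → R)

lemma esym_zero (m : ℕ) : esym x 0 m = 1 := by
  simp [esym]

lemma esym_nil (k : ℕ) : esym x (k+1) 0 = 0 := by
  rw [esym, show Finset.Icc 1 0 = (∅ : Finset ℕ) by simp,
    Finset.powersetCard_eq_empty.2 (by simp), Finset.sum_empty]

lemma hsym_zero (j : ℕ) : hsym x 0 j = 1 := by
  simp [hsym, Sym.eq_nil_of_card_zero]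

lemma hsym_nil (r : ℕ) : hsym x (r+1) 0 = 0 := by
  simp [hsym, Finset.sym_eq_empty]

lemma esym_succ (k N : ℕ) :
    esym x (k+1) (N+1) = esym x (k+1) N + x (N+1) * esym x k N := by
  have hIcc : Finset.Icc 1 (N+1) = insert (N+1) (Finset.Icc 1 N) := by
    ext a; simp [Nat.le_succ_iff_eq_or_le (m:=a) (n:=N)]; omega
  have hnm : N+1 ∉ Finset.Icc 1 N := by simp
  rw [esym, hIcc, Finset.powersetCard_succ_insert hnm, Finset.sum_union, esym, esym,
    Finset.sum_image, Finset.mul_sum]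
  · congr 1
    refine Finset.sum_congr rfl fun J hJ => ?_
    rw [Finset.prod_insert fun h => hnm ((Finset.mem_powersetCard.1 hJ).1 h)]
  · intro J hJ K hK h
    have hJ' := (Finset.mem_powersetCard.1 hJ).1
    have hK' := (Finset.mem_powersetCard.1 hK).1
    have : ∀ L : Finset ℕ, L ⊆ Finset.Icc 1 N → (insert (N+1) L).erase (N+1) = L := by
      intro L hL
      rw [Finset.erase_insert fun h => hnm (hL h)]
    rw [← this J hJ', ← this K hK', h]
  · rw [Finset.disjoint_left]
    intro J hJ hJ'
    obtain ⟨K, hK, rfl⟩ := Finset.mem_image.1 hJ'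
    exact hnm ((Finset.mem_powersetCard.1 hJ).1 (Finset.mem_insert_self _ _))

lemma hsym_succ (r j : ℕ) :
    hsym x (r+1) (j+1) = hsym x (r+1) j + x (j+1) * hsym x r (j+1) := by
  classical
  have hIcc : Finset.Icc 1 (j+1) = insert (j+1) (Finset.Icc 1 j) := by
    ext a; simp; omega
  rw [hsym, hIcc]
  rw [← Finset.sum_filter_add_sum_filter_not _ (fun t : Sym ℕ (r+1) => (j+1) ∈ t)]
  have h1 : (Finset.filter (fun t : Sym ℕ (r+1) => ¬ (j+1) ∈ t)
      ((insert (j+1) (Finset.Icc 1 j)).sym (r+1))) = (Finset.Icc 1 j).sym (r+1) := by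
    ext t
    simp only [Finset.mem_filter, Finset.mem_sym_iff, Finset.mem_insert]
    constructor
    · rintro ⟨h, hn⟩ a ha
      rcases h a ha with h' | h'
      · exact absurd (h' ▸ ha) hn
      · exact h'
    · intro h
      refine ⟨fun a ha => Or.inr (h a ha), fun hc => ?_⟩
      have := h _ hc
      simp at this
  have h2 : ∑ t ∈ Finset.filter (fun t : Sym ℕ (r+1) => (j+1) ∈ t)
      ((insert (j+1) (Finset.Icc 1 j)).sym (r+1)), (Multiset.map x t.1).prod
      = x (j+1) * ∑ t ∈ (insert (j+1) (Finset.Icc 1 j)).sym r, (Multiset.map x t.1).prod := by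
    rw [Finset.mul_sum]
    refine Finset.sum_bij' (fun t ht => t.erase (j+1) (Finset.mem_filter.1 ht).2)
      (fun t _ => Sym.cons (j+1) t) ?_ ?_ ?_ ?_ ?_
    · intro a ha
      rw [Finset.mem_sym_iff]
      intro b hb
      have : b ∈ a := Multiset.mem_of_mem_erase (by simpa [Sym.erase] using hb)
      exact Finset.mem_sym_iff.1 (Finset.mem_filter.1 ha).1 b this
    · intro a ha
      rw [Finset.mem_filter]
      refine ⟨Finset.mem_sym_iff.2 fun b hb => ?_, Sym.mem_cons_self _ _⟩
      rcases Sym.mem_cons.1 hb with h | h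
      · simp [h]
      · exact Finset.mem_sym_iff.1 ha b h
    · intro a ha
      exact Sym.cons_erase (Finset.mem_filter.1 ha).2
    · intro a _
      exact Sym.erase_cons_head a (j+1)
    · intro a ha
      conv_lhs => rw [← Sym.cons_erase (Finset.mem_filter.1 ha).2]
      simp [Sym.cons]
  rw [h1, h2, hsym, hsym, hIcc]
  ring

open PowerSeries in
noncomputable def Hs (j : ℕ) : PowerSeries R := PowerSeries.mk fun r => hsym x r j

open PowerSeries in
noncomputable def Es (N : ℕ) : PowerSeries R := PowerSeries.mk fun s => (-1)^s * esym x s N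

open PowerSeries

lemma Es_succ (N : ℕ) : Es x (N+1) = Es x N * (1 - PowerSeries.C (x (N+1)) * PowerSeries.X) := by
  ext k
  rw [mul_sub, mul_one, map_sub]
  cases k with
  | zero => simp [Es, esym_zero]
  | succ k =>
      rw [show Es x N * (C (x (N+1)) * X) = Es x N * C (x (N+1)) * X by ring,
        PowerSeries.coeff_succ_mul_X, PowerSeries.coeff_mul_C]
      simp only [Es, PowerSeries.coeff_mk, esym_succ x k N]
      ring

lemma Hs_mul (j : ℕ) : Hs x (j+1) * (1 - PowerSeries.C (x (j+1)) * PowerSeries.X) = Hs x j := by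
  ext k
  rw [mul_sub, mul_one, map_sub]
  cases k with
  | zero => simp [Hs, hsym_zero]
  | succ k =>
      rw [show Hs x (j+1) * (C (x (j+1)) * X) = Hs x (j+1) * C (x (j+1)) * X by ring,
        PowerSeries.coeff_succ_mul_X, PowerSeries.coeff_mul_C]
      simp only [Hs, PowerSeries.coeff_mk, hsym_succ x k j]
      ring

lemma Hs_mul_Es (j : ℕ) : Hs x j * Es x j = 1 := by
  induction j with
  | zero =>
      have h1 : Hs x 0 = 1 := by
        ext k; cases k with
        | zero => simp [Hs, hsym_zero]
        | succ k => simp [Hs, hsym_nil, PowerSeries.coeff_one]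
      have h2 : Es x 0 = 1 := by
        ext k; cases k with
        | zero => simp [Es, esym_zero]
        | succ k => simp [Es, esym_nil, PowerSeries.coeff_one]
      rw [h1, h2, one_mul]
  | succ j ih =>
      calc Hs x (j+1) * Es x (j+1)
          = Hs x (j+1) * (1 - PowerSeries.C (x (j+1)) * PowerSeries.X) * Es x j := by
            rw [Es_succ]; ring
        _ = Hs x j * Es x j := by rw [Hs_mul]
        _ = 1 := ih

lemma Hs_mul_Es_ge (j N : ℕ) (h : j ≤ N) :
    Hs x j * Es x N = ∏ i ∈ Finset.Icc (j+1) N, (1 - PowerSeries.C (x i) * PowerSeries.X) := by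
  induction N, h using Nat.le_induction with
  | base => rw [Hs_mul_Es, show Finset.Icc (j+1) j = ∅ by simp, Finset.prod_empty]
  | succ N hN ih =>
      rw [Es_succ, show Finset.Icc (j+1) (N+1) = insert (N+1) (Finset.Icc (j+1) N) by
        ext a; simp; omega, Finset.prod_insert (by simp), ← mul_assoc, ih]
      ring

lemma coeff_prod_eq_zero (s : Finset ℕ) (k : ℕ) (hk : s.card < k) :
    PowerSeries.coeff k (∏ i ∈ s, (1 - PowerSeries.C (x i) * PowerSeries.X)) = 0 := by
  induction s using Finset.induction generalizing k with
  | empty =>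
      rw [Finset.prod_empty]
      simp at hk
      rcases Nat.exists_eq_add_of_lt hk with ⟨k', rfl⟩
      simp [PowerSeries.coeff_one]
  | insert a s' ha ih =>
      rw [Finset.prod_insert ha, mul_comm]
      rw [Finset.card_insert_of_notMem ha] at hk
      rcases Nat.exists_eq_add_of_lt hk with ⟨k', hkk⟩
      rw [mul_sub, mul_one, map_sub]
      rw [show (∏ i ∈ s', (1 - PowerSeries.C (x i) * PowerSeries.X)) * (C (x a) * X)
        = (∏ i ∈ s', (1 - PowerSeries.C (x i) * PowerSeries.X)) * C (x a) * X by ring]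
      subst hkk
      rw [PowerSeries.coeff_succ_mul_X, PowerSeries.coeff_mul_C, ih _ (by omega),
        ih _ (by omega)]
      simp

lemma key (j m : ℕ) (hm : 1 ≤ m) :
    ∑ r ∈ Finset.range (m+1), (-1:R)^r * hsym x r j * esym x (m-r) (j+m-1) = 0 := by
  have hle : j ≤ j+m-1 := by omega
  have hcard : (Finset.Icc (j+1) (j+m-1)).card = m - 1 := by
    rw [Nat.card_Icc]; omega
  have h0 : PowerSeries.coeff m (Hs x j * Es x (j+m-1)) = 0 := by
    rw [Hs_mul_Es_ge x j _ hle]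
    exact coeff_prod_eq_zero x _ m (by omega)
  rw [PowerSeries.coeff_mul, Finset.Nat.sum_antidiagonal_eq_sum_range_succ_mk] at h0
  simp only [Hs, Es, PowerSeries.coeff_mk] at h0
  have h1 : ∀ r ∈ Finset.range (m+1),
      (-1:R)^r * hsym x r j * esym x (m-r) (j+m-1)
      = (-1:R)^m * (hsym x r j * ((-1)^(m-r) * esym x (m-r) (j+m-1))) := by
    intro r hr
    have hrm : r ≤ m := by simpa using Nat.lt_succ_iff.1 (Finset.mem_range.1 hr)
    have e1 : (-1:R)^r * (-1:R)^(m-r) = (-1:R)^m := by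
      rw [← pow_add]; congr 1; omega
    have e2 : ((-1:R)^(m-r)) * ((-1:R)^(m-r)) = 1 := by
      rw [← pow_add, ← two_mul, pow_mul]; simp
    calc (-1:R)^r * hsym x r j * esym x (m-r) (j+m-1)
        = ((-1:R)^r * (((-1:R)^(m-r)) * ((-1:R)^(m-r)))) * (hsym x r j * esym x (m-r) (j+m-1)) := by
          rw [e2]; ring
      _ = (-1:R)^m * (hsym x r j * ((-1)^(m-r) * esym x (m-r) (j+m-1))) := by
          rw [← e1]; ring
  rw [Finset.sum_congr rfl h1, ← Finset.mul_sum, h0, mul_zero]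

lemma entry (n : ℕ) (p q : Fin n) :
    (∑ k ∈ Finset.range n,
      (if k ≤ (p:ℕ) then esym x ((p:ℕ) - k) (p:ℕ) else 0) *
      (if (q:ℕ) ≤ k then (-1:R)^(k-(q:ℕ)) * hsym x (k-(q:ℕ)) ((q:ℕ)+1) else 0))
    = if p = q then 1 else 0 := by
  set g : ℕ → R := fun k =>
    (if k ≤ (p:ℕ) then esym x ((p:ℕ) - k) (p:ℕ) else 0) *
    (if (q:ℕ) ≤ k then (-1:R)^(k-(q:ℕ)) * hsym x (k-(q:ℕ)) ((q:ℕ)+1) else 0) with hg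
  by_cases hqp : (q:ℕ) ≤ (p:ℕ)
  · have hsub : Finset.Icc (q:ℕ) (p:ℕ) ⊆ Finset.range n := by
      intro k hk
      simp only [Finset.mem_Icc] at hk
      exact Finset.mem_range.2 (lt_of_le_of_lt hk.2 p.2)
    have hzero : ∀ k ∈ Finset.range n, k ∉ Finset.Icc (q:ℕ) (p:ℕ) → g k = 0 := by
      intro k _ hk
      simp only [Finset.mem_Icc, not_and_or, not_le] at hk
      rcases hk with hk | hk
      · rw [hg]; simp only; rw [if_neg (show ¬ (q:ℕ) ≤ k by omega), mul_zero]
      · rw [hg]; simp only; rw [if_neg (show ¬ k ≤ (p:ℕ) by omega), zero_mul]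
    rw [← Finset.sum_subset hsub hzero]
    have hIcc : Finset.Icc (q:ℕ) (p:ℕ) = Finset.Ico (q:ℕ) ((p:ℕ)+1) := by
      ext a; simp
    rw [hIcc, Finset.sum_Ico_eq_sum_range]
    set m := (p:ℕ) - (q:ℕ) with hm
    have hrange : (p:ℕ) + 1 - (q:ℕ) = m + 1 := by omega
    rw [hrange]
    have hterm : ∀ r ∈ Finset.range (m+1),
        g ((q:ℕ) + r) = (-1:R)^r * hsym x r ((q:ℕ)+1) * esym x (m-r) (((q:ℕ)+1)+m-1) := by
      intro r hr
      have hrm : r ≤ m := Nat.lt_succ_iff.1 (Finset.mem_range.1 hr)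
      rw [hg]; simp only
      rw [if_pos (by omega), if_pos (by omega)]
      have e1 : (p:ℕ) - ((q:ℕ) + r) = m - r := by omega
      have e2 : (q:ℕ) + r - (q:ℕ) = r := by omega
      have e3 : (p:ℕ) = ((q:ℕ)+1)+m-1 := by omega
      rw [e1, e2, ← e3]
      ring
    rw [Finset.sum_congr rfl hterm]
    by_cases hpq : p = q
    · have hm0 : m = 0 := by omega
      subst hpq
      rw [if_pos rfl, hm0]
      simp [hsym_zero, esym_zero]
    · have hm1 : 1 ≤ m := by
        rcases Nat.lt_or_ge 0 m with h | h
        · omega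
        · exfalso; exact hpq (Fin.ext (by omega))
      rw [if_neg hpq]
      exact key x ((q:ℕ)+1) m hm1
  · have : ∀ k ∈ Finset.range n, g k = 0 := by
      intro k _
      rw [hg]; simp only
      by_cases h1 : k ≤ (p:ℕ)
      · rw [if_neg (show ¬ (q:ℕ) ≤ k by omega), mul_zero]
      · rw [if_neg h1, zero_mul]
    rw [Finset.sum_congr rfl this, Finset.sum_const_zero,
      if_neg (fun h => hqp (by rw [h]))]


end Aux

/-- If `P` is the lower unitriangular matrix with entries
`P_{ij} = e_{i-j}(x_1,…,x_{i-1})`, then `(P⁻¹)_{ij} = (-1)^{i-j} h_{i-j}(x_1,…,x_j)`. -/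
theorem stmt6 {R : Type*} [CommRing R] (n : ℕ) (x : ℕ → R)
    (P : Matrix (Fin n) (Fin n) R)
    (hP : ∀ p q : Fin n, P p q =
      if (q : ℕ) ≤ (p : ℕ) then esym x ((p : ℕ) - (q : ℕ)) (p : ℕ) else 0) :
    ∀ p q : Fin n, (q : ℕ) ≤ (p : ℕ) →
      P⁻¹ p q = (-1 : R) ^ ((p : ℕ) - (q : ℕ)) *
        hsym x ((p : ℕ) - (q : ℕ)) ((q : ℕ) + 1) := by
  set Q : Matrix (Fin n) (Fin n) R := fun p q =>
    if (q : ℕ) ≤ (p : ℕ) then (-1:R)^((p:ℕ)-(q:ℕ)) * hsym x ((p:ℕ)-(q:ℕ)) ((q:ℕ)+1) else 0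
    with hQ
  have hPQ : P * Q = 1 := by
    ext p q
    rw [Matrix.mul_apply]
    have step : ∀ k : Fin n, P p k * Q k q =
        (fun k : ℕ =>
          (if k ≤ (p:ℕ) then esym x ((p:ℕ) - k) (p:ℕ) else 0) *
          (if (q:ℕ) ≤ k then (-1:R)^(k-(q:ℕ)) * hsym x (k-(q:ℕ)) ((q:ℕ)+1) else 0)) (k : ℕ) := by
      intro k
      rw [hP p k, hQ]
    rw [Finset.sum_congr rfl (fun k _ => step k),
      Fin.sum_univ_eq_sum_range (fun k : ℕ =>
        (if k ≤ (p:ℕ) then esym x ((p:ℕ) - k) (p:ℕ) else 0) *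
        (if (q:ℕ) ≤ k then (-1:R)^(k-(q:ℕ)) * hsym x (k-(q:ℕ)) ((q:ℕ)+1) else 0)) n,
      entry x n p q]
    simp [Matrix.one_apply]
  intro p q hqp
  rw [Matrix.inv_eq_right_inv hPQ, hQ]
  simp [hqp]
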